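/- (Controlled-unitary family) Let u be any 2×2 unitary matrix over ℂ, and let U_CU be the matrix indexed by Fin 2 × Fin 2 with entries U_CU (a,b) (a',b') = (if a = 0 then (if b = b' then 1 else 0) else u b b') when a = a', and 0 when a ≠ a' (i.e. U_CU = |0⟩⟨0| ⊗ I₂ + |1⟩⟨1| ⊗ u). Then e(U_CU) = (2/9)·(1 − |Tr u|²/4) and Δ²(U_CU) = (11/25)·e(U_CU)²; in particular the ratio Δ(U_CU)/e(U_CU) equals √11/5 whenever e(U_CU) ≠ 0. For u = diag(1, e^{iθ}) this gives e = (2/9)·sin²(θ/2) and Δ² = (44/2025)·sin⁴(θ/2). -/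

import Mathlib

noncomputable section

open Matrix
open scoped Kronecker ComplexConjugate

/-- The swap `T₁₃` of subsystems 1 and 3 on the two-copy space. -/
def T13 (d₁ d₂ : ℕ) :
    Matrix ((Fin d₁ × Fin d₂) × (Fin d₁ × Fin d₂)) ((Fin d₁ × Fin d₂) × (Fin d₁ × Fin d₂)) ℂ :=
  Matrix.of fun x y =>
    if x.1.1 = y.2.1 ∧ x.2.1 = y.1.1 ∧ x.1.2 = y.1.2 ∧ x.2.2 = y.2.2 then 1 else 0

/-- The swap `T₂₄` of subsystems 2 and 4 on the two-copy space. -/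
def T24 (d₁ d₂ : ℕ) :
    Matrix ((Fin d₁ × Fin d₂) × (Fin d₁ × Fin d₂)) ((Fin d₁ × Fin d₂) × (Fin d₁ × Fin d₂)) ℂ :=
  Matrix.of fun x y =>
    if x.1.2 = y.2.2 ∧ x.2.2 = y.1.2 ∧ x.1.1 = y.1.1 ∧ x.2.1 = y.2.1 then 1 else 0

/-- `P₁₃⁺ = (1 + T₁₃)/2`. -/
def P13p (d₁ d₂ : ℕ) := (2 : ℂ)⁻¹ • (1 + T13 d₁ d₂)

/-- `P₁₃⁻ = (1 − T₁₃)/2`. -/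
def P13m (d₁ d₂ : ℕ) := (2 : ℂ)⁻¹ • (1 - T13 d₁ d₂)

/-- `P₂₄⁺ = (1 + T₂₄)/2`. -/
def P24p (d₁ d₂ : ℕ) := (2 : ℂ)⁻¹ • (1 + T24 d₁ d₂)

/-- The entangling power
`e(U) = (8/(d₁(d₁+1)d₂(d₂+1))) · Tr((U⊗U) P₁₃⁺ P₂₄⁺ (U⊗U)ᴴ P₁₃⁻)`. -/
def ePow (d₁ d₂ : ℕ) (U : Matrix (Fin d₁ × Fin d₂) (Fin d₁ × Fin d₂) ℂ) : ℂ :=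
  (8 / ((d₁ : ℂ) * ((d₁ : ℂ) + 1) * (d₂ : ℂ) * ((d₂ : ℂ) + 1))) *
    ((U ⊗ₖ U) * P13p d₁ d₂ * P24p d₁ d₂ * (U ⊗ₖ U)ᴴ * P13m d₁ d₂).trace

/-- The permutation operator on the four-copy space induced by a permutation `σ` of the
four odd positions {1,3,5,7}: it permutes the four `Fin d₁` factors according to `σ`
while fixing all `Fin d₂` factors. -/
def Vodd (d₁ d₂ : ℕ) (σ : Equiv.Perm (Fin 4)) :
    Matrix (Fin 4 → Fin d₁ × Fin d₂) (Fin 4 → Fin d₁ × Fin d₂) ℂ :=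
  Matrix.of fun f g =>
    if (∀ i, (f i).1 = (g (σ⁻¹ i)).1) ∧ (∀ i, (f i).2 = (g i).2) then 1 else 0

/-- The permutation operator on the four-copy space induced by a permutation `σ` of the
four even positions {2,4,6,8}: it permutes the four `Fin d₂` factors according to `σ`
while fixing all `Fin d₁` factors. -/
def Veven (d₁ d₂ : ℕ) (σ : Equiv.Perm (Fin 4)) :
    Matrix (Fin 4 → Fin d₁ × Fin d₂) (Fin 4 → Fin d₁ × Fin d₂) ℂ :=
  Matrix.of fun f g =>
    if (∀ i, (f i).2 = (g (σ⁻¹ i)).2) ∧ (∀ i, (f i).1 = (g i).1) then 1 else 0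

/-- `P₁₃₅₇⁺`: the average of the 24 permutation operators over all permutations of the
odd positions {1,3,5,7}. -/
def P1357 (d₁ d₂ : ℕ) :
    Matrix (Fin 4 → Fin d₁ × Fin d₂) (Fin 4 → Fin d₁ × Fin d₂) ℂ :=
  ((Nat.factorial 4 : ℂ))⁻¹ • ∑ σ : Equiv.Perm (Fin 4), Vodd d₁ d₂ σ

/-- `P₂₄₆₈⁺`: the average of the 24 permutation operators over all permutations of the
even positions {2,4,6,8}. -/
def P2468 (d₁ d₂ : ℕ) :
    Matrix (Fin 4 → Fin d₁ × Fin d₂) (Fin 4 → Fin d₁ × Fin d₂) ℂ :=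
  ((Nat.factorial 4 : ℂ))⁻¹ • ∑ σ : Equiv.Perm (Fin 4), Veven d₁ d₂ σ

/-- `T₁₃` on the four-copy space: the swap of subsystems 1 and 3. -/
def T13c (d₁ d₂ : ℕ) := Vodd d₁ d₂ (Equiv.swap (0 : Fin 4) 1)

/-- `T₅₇` on the four-copy space: the swap of subsystems 5 and 7. -/
def T57c (d₁ d₂ : ℕ) := Vodd d₁ d₂ (Equiv.swap (2 : Fin 4) 3)

/-- `P₁₃⁻ = (1 − T₁₃)/2` on the four-copy space. -/
def P13mc (d₁ d₂ : ℕ) := (2 : ℂ)⁻¹ • (1 - T13c d₁ d₂)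

/-- `P₅₇⁻ = (1 − T₅₇)/2` on the four-copy space. -/
def P57mc (d₁ d₂ : ℕ) := (2 : ℂ)⁻¹ • (1 - T57c d₁ d₂)

/-- The fourfold Kronecker power `U^{⊗4}`. -/
def kpow4 (d₁ d₂ : ℕ) (U : Matrix (Fin d₁ × Fin d₂) (Fin d₁ × Fin d₂) ℂ) :
    Matrix (Fin 4 → Fin d₁ × Fin d₂) (Fin 4 → Fin d₁ × Fin d₂) ℂ :=
  Matrix.of fun f g => ∏ i, U (f i) (g i)

/-- `D_d = 1/(d(d+1)(d+2)(d+3))`. -/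
def Dc (d : ℕ) : ℂ := 1 / ((d : ℂ) * ((d : ℂ) + 1) * ((d : ℂ) + 2) * ((d : ℂ) + 3))

/-- The squared entangling power deviation
`Δ²(U) = 4·(4!)²·D_{d₁}·D_{d₂}·Tr(U^{⊗4} P₁₃₅₇⁺ P₂₄₆₈⁺ (U^{⊗4})ᴴ P₁₃⁻ P₅₇⁻) − e(U)²`. -/
def deltaSq (d₁ d₂ : ℕ) (U : Matrix (Fin d₁ × Fin d₂) (Fin d₁ × Fin d₂) ℂ) : ℂ :=
  4 * (Nat.factorial 4 : ℂ) ^ 2 * Dc d₁ * Dc d₂ *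
      (kpow4 d₁ d₂ U * P1357 d₁ d₂ * P2468 d₁ d₂ * (kpow4 d₁ d₂ U)ᴴ *
        P13mc d₁ d₂ * P57mc d₁ d₂).trace -
    (ePow d₁ d₂ U) ^ 2

/-- The controlled-unitary gate `|0⟩⟨0| ⊗ I₂ + |1⟩⟨1| ⊗ u`. -/
def CUgate (u : Matrix (Fin 2) (Fin 2) ℂ) : Matrix (Fin 2 × Fin 2) (Fin 2 × Fin 2) ℂ :=
  Matrix.of fun x y =>
    if x.1 = y.1 then (if x.1 = 0 then (if x.2 = y.2 then 1 else 0) else u x.2 y.2)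
    else 0

-- permutation matrices
def pmat {n : Type*} [Fintype n] [DecidableEq n] (e : n ≃ n) : Matrix n n ℂ :=
  Matrix.of fun x y => if y = e x then 1 else 0

lemma mul_pmat {n : Type*} [Fintype n] [DecidableEq n] (A : Matrix n n ℂ) (e : n ≃ n) :
    A * pmat e = Matrix.of fun x y => A x (e.symm y) := by
  ext x y
  simp only [Matrix.mul_apply, pmat, Matrix.of_apply, mul_ite, mul_one, mul_zero]
  rw [Finset.sum_eq_single (e.symm y)]
  · simp
  · intro b _ hb
    rw [if_neg]
    intro h; exact hb (by simp [h])
  · simp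

lemma pmat_mul {n : Type*} [Fintype n] [DecidableEq n] (A : Matrix n n ℂ) (e : n ≃ n) :
    pmat e * A = Matrix.of fun x y => A (e x) y := by
  ext x y
  simp only [Matrix.mul_apply, pmat, Matrix.of_apply, ite_mul, one_mul, zero_mul]
  rw [Finset.sum_eq_single (e x)] <;> simp +contextual [eq_comm]

lemma pmat_mul_pmat {n : Type*} [Fintype n] [DecidableEq n] (e f : n ≃ n) :
    pmat e * pmat f = pmat (e.trans f) := by
  rw [pmat_mul]; ext x y; simp [pmat]; exact if_congr Iff.rfl rfl rfl

lemma pmat_refl {n : Type*} [Fintype n] [DecidableEq n] :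
    pmat (Equiv.refl n) = (1 : Matrix n n ℂ) := by
  ext x y; simp [pmat, Matrix.one_apply, eq_comm]

lemma trace_mul_pmat {n : Type*} [Fintype n] [DecidableEq n] (A : Matrix n n ℂ) (e : n ≃ n) :
    (A * pmat e).trace = ∑ x, A x (e.symm x) := by
  simp [Matrix.trace, mul_pmat, Matrix.diag]

lemma TrMXMY {n : Type*} [Fintype n] [DecidableEq n] (M : Matrix n n ℂ) (e f : n ≃ n) :
    (M * pmat e * Mᴴ * pmat f).trace = ∑ x, ∑ y, M x (e.symm y) * conj (M (f.symm x) y) := by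
  rw [trace_mul_pmat]
  congr 1; funext x
  rw [Matrix.mul_apply]
  congr 1; funext y
  rw [mul_pmat]
  simp [Matrix.conjTranspose_apply]

abbrev Twoc := (Fin 2 × Fin 2) × (Fin 2 × Fin 2)

def e13 : Twoc ≃ Twoc :=
  ⟨fun x => ((x.2.1, x.1.2), (x.1.1, x.2.2)), fun x => ((x.2.1, x.1.2), (x.1.1, x.2.2)),
   fun _ => rfl, fun _ => rfl⟩
def e24 : Twoc ≃ Twoc :=
  ⟨fun x => ((x.1.1, x.2.2), (x.2.1, x.1.2)), fun x => ((x.1.1, x.2.2), (x.2.1, x.1.2)),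
   fun _ => rfl, fun _ => rfl⟩

lemma T13_eq : T13 2 2 = pmat e13 := by
  ext x y
  simp only [T13, pmat, Matrix.of_apply, e13, Equiv.coe_fn_mk]
  refine if_congr ?_ rfl rfl
  constructor
  · rintro ⟨h1, h2, h3, h4⟩
    refine Prod.ext (Prod.ext ?_ ?_) (Prod.ext ?_ ?_) <;> simp [h1.symm, h2.symm, h3.symm, h4.symm]
  · rintro rfl; exact ⟨rfl, rfl, rfl, rfl⟩

lemma T24_eq : T24 2 2 = pmat e24 := by
  ext x y
  simp only [T24, pmat, Matrix.of_apply, e24, Equiv.coe_fn_mk]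
  refine if_congr ?_ rfl rfl
  constructor
  · rintro ⟨h1, h2, h3, h4⟩
    refine Prod.ext (Prod.ext ?_ ?_) (Prod.ext ?_ ?_) <;> simp [h1.symm, h2.symm, h3.symm, h4.symm]
  · rintro rfl; exact ⟨rfl, rfl, rfl, rfl⟩

variable (u : Matrix (Fin 2) (Fin 2) ℂ)

lemma mul_pmat_pmat {n : Type*} [Fintype n] [DecidableEq n] (A : Matrix n n ℂ) (e f : n ≃ n) :
    A * pmat e * pmat f = A * pmat (e.trans f) := by
  rw [mul_assoc, pmat_mul_pmat]

lemma etrace_expand :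
    ((CUgate u ⊗ₖ CUgate u) * P13p 2 2 * P24p 2 2 * (CUgate u ⊗ₖ CUgate u)ᴴ * P13m 2 2).trace
    = (8:ℂ)⁻¹ * (
      ((CUgate u ⊗ₖ CUgate u) * pmat (Equiv.refl Twoc) * (CUgate u ⊗ₖ CUgate u)ᴴ * pmat (Equiv.refl Twoc)).trace
    + ((CUgate u ⊗ₖ CUgate u) * pmat e13 * (CUgate u ⊗ₖ CUgate u)ᴴ * pmat (Equiv.refl Twoc)).trace
    + ((CUgate u ⊗ₖ CUgate u) * pmat e24 * (CUgate u ⊗ₖ CUgate u)ᴴ * pmat (Equiv.refl Twoc)).trace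
    + ((CUgate u ⊗ₖ CUgate u) * pmat (e13.trans e24) * (CUgate u ⊗ₖ CUgate u)ᴴ * pmat (Equiv.refl Twoc)).trace
    - ((CUgate u ⊗ₖ CUgate u) * pmat (Equiv.refl Twoc) * (CUgate u ⊗ₖ CUgate u)ᴴ * pmat e13).trace
    - ((CUgate u ⊗ₖ CUgate u) * pmat e13 * (CUgate u ⊗ₖ CUgate u)ᴴ * pmat e13).trace
    - ((CUgate u ⊗ₖ CUgate u) * pmat e24 * (CUgate u ⊗ₖ CUgate u)ᴴ * pmat e13).trace
    - ((CUgate u ⊗ₖ CUgate u) * pmat (e13.trans e24) * (CUgate u ⊗ₖ CUgate u)ᴴ * pmat e13).trace) := by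
  rw [P13p, P24p, P13m, T13_eq, T24_eq, ← pmat_refl (n := Twoc)]
  set M := CUgate u ⊗ₖ CUgate u with hM
  simp only [Matrix.smul_mul, Matrix.mul_smul, add_mul, mul_add, sub_mul, mul_sub,
    Matrix.trace_add, Matrix.trace_sub, Matrix.trace_smul, smul_add, smul_sub, smul_smul,
    mul_pmat_pmat, Equiv.refl_trans, Equiv.trans_refl, smul_eq_mul]
  ring

set_option maxHeartbeats 16000000 in
lemma etrace_val (hu : uᴴ * u = 1) :
    ((CUgate u ⊗ₖ CUgate u) * P13p 2 2 * P24p 2 2 * (CUgate u ⊗ₖ CUgate u)ᴴ * P13m 2 2).trace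
    = 1 - ((u 0 0 + u 1 1) * (conj (u 0 0) + conj (u 1 1))) / 4 := by
  have r1 : conj (u 0 0) * u 0 0 + conj (u 1 0) * u 1 0 = 1 := by
    have := congrFun (congrFun hu 0) 0
    simpa [Matrix.mul_apply, Fin.sum_univ_two, Matrix.one_apply, Matrix.conjTranspose_apply] using this
  have r4 : conj (u 0 1) * u 0 1 + conj (u 1 1) * u 1 1 = 1 := by
    have := congrFun (congrFun hu 1) 1
    simpa [Matrix.mul_apply, Fin.sum_univ_two, Matrix.one_apply, Matrix.conjTranspose_apply] using this
  rw [etrace_expand, TrMXMY, TrMXMY, TrMXMY, TrMXMY, TrMXMY, TrMXMY, TrMXMY, TrMXMY]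
  simp only [Fintype.sum_prod_type, Fin.sum_univ_two, Equiv.coe_fn_mk, Equiv.coe_fn_symm_mk,
    Equiv.refl_symm, Equiv.refl_apply, Equiv.symm_trans_apply, e13, e24,
    Matrix.kroneckerMap_apply, CUgate, Matrix.of_apply]
  norm_num
  linear_combination (1/2 : ℂ) * r1 + (1/2 : ℂ) * r4

-- ### part B infra
abbrev C4 := Fin 4 → Fin 2
abbrev I4 := Fin 4 → Fin 2 × Fin 2

def wt (v : C4) : ℕ := (Finset.univ.filter (fun i => v i = 1)).card
def cnt (v w : C4) : ℕ :=
  (Finset.univ.filter (fun σ : Equiv.Perm (Fin 4) => w = v ∘ ⇑σ)).card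

theorem cnt_eq : ∀ v w : C4,
    cnt v w = if wt v = wt w then (wt v).factorial * (4 - wt v).factorial else 0 := by decide

theorem wt_eval : ∀ a b c d : Fin 2, wt ![a, b, c, d] = a.val + b.val + c.val + d.val := by decide

def pi4 : (Fin 2 × Fin 2 × Fin 2 × Fin 2) ≃ C4 where
  toFun p := ![p.1, p.2.1, p.2.2.1, p.2.2.2]
  invFun v := (v 0, v 1, v 2, v 3)
  left_inv := by decide
  right_inv := by decide

lemma sum_pi4 {M : Type*} [AddCommMonoid M] (F : C4 → M) :
    ∑ v, F v = ∑ a : Fin 2, ∑ b : Fin 2, ∑ c : Fin 2, ∑ d : Fin 2, F ![a, b, c, d] := by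
  rw [← Equiv.sum_comp pi4 F]
  simp only [Fintype.sum_prod_type]
  rfl

lemma sum_split {M : Type*} [AddCommMonoid M] (F : I4 → M) :
    ∑ f : I4, F f = ∑ c : C4, ∑ x : C4, F (fun i => (c i, x i)) := by
  rw [← Equiv.sum_comp (Equiv.arrowProdEquivProdArrow (Fin 4) (fun _ => Fin 2) (fun _ => Fin 2)).symm F]
  simp only [Fintype.sum_prod_type]
  rfl

def ctrlf (f : I4) : C4 := fun i => (f i).1
def tgtf (f : I4) : C4 := fun i => (f i).2

lemma ctrlf_pair (c x : C4) : ctrlf (fun i => (c i, x i)) = c := rfl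
lemma tgtf_pair (c x : C4) : tgtf (fun i => (c i, x i)) = x := rfl

lemma odd_cond (f g : I4) (σ : Equiv.Perm (Fin 4)) :
    (∀ i, (f i).1 = (g (σ⁻¹ i)).1) ↔ ctrlf g = ctrlf f ∘ ⇑σ := by
  constructor
  · intro h; funext j
    have := h (σ j)
    simp only [Equiv.Perm.inv_def, Equiv.symm_apply_apply] at this
    exact this.symm
  · intro h i
    have := congrFun h (σ⁻¹ i)
    simp only [Function.comp_apply, Equiv.Perm.inv_def, Equiv.apply_symm_apply] at this
    exact this.symm

lemma even_cond (f g : I4) (σ : Equiv.Perm (Fin 4)) :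
    (∀ i, (f i).2 = (g (σ⁻¹ i)).2) ↔ tgtf g = tgtf f ∘ ⇑σ := by
  constructor
  · intro h; funext j
    have := h (σ j)
    simp only [Equiv.Perm.inv_def, Equiv.symm_apply_apply] at this
    exact this.symm
  · intro h i
    have := congrFun h (σ⁻¹ i)
    simp only [Function.comp_apply, Equiv.Perm.inv_def, Equiv.apply_symm_apply] at this
    exact this.symm

lemma fun_cond (f g : I4) : (∀ i, (f i).2 = (g i).2) ↔ tgtf f = tgtf g :=
  ⟨fun h => funext h, fun h i => congrFun h i⟩

lemma fun_cond1 (f g : I4) : (∀ i, (f i).1 = (g i).1) ↔ ctrlf f = ctrlf g :=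
  ⟨fun h => funext h, fun h i => congrFun h i⟩

lemma sum_indicator_cnt (v w : C4) :
    (∑ σ : Equiv.Perm (Fin 4), if w = v ∘ ⇑σ then (1:ℂ) else 0) = (cnt v w : ℂ) := by
  rw [Finset.sum_boole, cnt]

lemma P1357_eq : P1357 2 2 = Matrix.of fun f g =>
    ((cnt (ctrlf f) (ctrlf g) : ℂ) / 24) * (if tgtf f = tgtf g then 1 else 0) := by
  ext f g
  simp only [P1357, Matrix.smul_apply, Matrix.sum_apply, Matrix.of_apply, smul_eq_mul]
  have hv : ∀ σ : Equiv.Perm (Fin 4), Vodd 2 2 σ f g =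
      (if ctrlf g = ctrlf f ∘ ⇑σ then (1:ℂ) else 0) * (if tgtf f = tgtf g then 1 else 0) := by
    intro σ
    simp only [Vodd, Matrix.of_apply, odd_cond, fun_cond]
    by_cases hA : ctrlf g = ctrlf f ∘ ⇑σ <;> by_cases hB : tgtf f = tgtf g <;> simp [hA, hB]
  rw [Finset.sum_congr rfl (fun σ _ => hv σ), ← Finset.sum_mul, sum_indicator_cnt]
  rw [show ((Nat.factorial 4 : ℂ)) = 24 by norm_num [Nat.factorial]]
  ring

lemma P2468_eq : P2468 2 2 = Matrix.of fun f g =>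
    ((cnt (tgtf f) (tgtf g) : ℂ) / 24) * (if ctrlf f = ctrlf g then 1 else 0) := by
  ext f g
  simp only [P2468, Matrix.smul_apply, Matrix.sum_apply, Matrix.of_apply, smul_eq_mul]
  have hv : ∀ σ : Equiv.Perm (Fin 4), Veven 2 2 σ f g =
      (if tgtf g = tgtf f ∘ ⇑σ then (1:ℂ) else 0) * (if ctrlf f = ctrlf g then 1 else 0) := by
    intro σ
    simp only [Veven, Matrix.of_apply, even_cond, fun_cond1]
    by_cases hA : tgtf g = tgtf f ∘ ⇑σ <;> by_cases hB : ctrlf f = ctrlf g <;> simp [hA, hB]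
  rw [Finset.sum_congr rfl (fun σ _ => hv σ), ← Finset.sum_mul, sum_indicator_cnt]
  rw [show ((Nat.factorial 4 : ℂ)) = 24 by norm_num [Nat.factorial]]
  ring

def Emat : Matrix I4 I4 ℂ := Matrix.of fun f g =>
  (cnt (ctrlf f) (ctrlf g) : ℂ) * (cnt (tgtf f) (tgtf g) : ℂ) / 576

lemma Emat_eq : P1357 2 2 * P2468 2 2 = Emat := by
  ext f g
  rw [P1357_eq, P2468_eq, Matrix.mul_apply]
  rw [sum_split (fun h => _)]
  have hc := ctrlf_pair; have ht := tgtf_pair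
  simp only [Matrix.of_apply, hc, ht]
  rw [Finset.sum_comm]
  simp only [mul_ite, ite_mul, mul_zero, zero_mul, mul_one, one_mul, Finset.sum_ite_eq,
    Finset.sum_ite_eq', Finset.mem_univ, if_true]
  simp only [Emat, Matrix.of_apply]
  change _ = (cnt (fun i => (f i).1) (fun i => (g i).1) : ℂ) * (cnt (fun i => (f i).2) (fun i => (g i).2) : ℂ) / 576
  ring

-- control-moving permutation operators
def cmov (s : Equiv.Perm (Fin 4)) : I4 ≃ I4 where
  toFun f := fun i => ((f (s i)).1, (f i).2)
  invFun f := fun i => ((f (s⁻¹ i)).1, (f i).2)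
  left_inv f := by funext i; simp
  right_inv f := by funext i; simp

lemma Vodd_pmat (σ : Equiv.Perm (Fin 4)) : Vodd 2 2 σ = pmat (cmov σ) := by
  ext f g
  simp only [Vodd, pmat, Matrix.of_apply]
  refine if_congr ?_ rfl rfl
  rw [odd_cond, fun_cond]
  constructor
  · rintro ⟨h1, h2⟩
    funext i
    exact Prod.ext (congrFun h1 i) (congrFun h2 i).symm
  · rintro rfl
    exact ⟨rfl, rfl⟩

lemma cmov_trans (σ τ : Equiv.Perm (Fin 4)) :
    (cmov σ).trans (cmov τ) = cmov (σ * τ) := by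
  apply Equiv.ext; intro f; funext i
  simp [cmov, Equiv.Perm.mul_apply]

lemma cmov_symm (σ : Equiv.Perm (Fin 4)) : (cmov σ).symm = cmov σ⁻¹ := by
  apply Equiv.ext; intro f; funext i
  simp [cmov]

lemma cmov_one : cmov 1 = Equiv.refl I4 := by
  apply Equiv.ext; intro f; funext i
  simp [cmov]

lemma CD_eq : P13mc 2 2 * P57mc 2 2 = (4 : ℂ)⁻¹ •
    (pmat (cmov 1) - pmat (cmov (Equiv.swap (0:Fin 4) 1)) - pmat (cmov (Equiv.swap (2:Fin 4) 3))
      + pmat (cmov (Equiv.swap (0:Fin 4) 1 * Equiv.swap (2:Fin 4) 3))) := by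
  rw [P13mc, P57mc, T13c, T57c, Vodd_pmat, Vodd_pmat]
  rw [Matrix.smul_mul, Matrix.mul_smul, smul_smul, sub_mul, mul_sub, mul_sub, one_mul, mul_one,
    pmat_mul_pmat, cmov_trans, cmov_one, pmat_refl]
  rw [show ((2:ℂ)⁻¹ * 2⁻¹) = 4⁻¹ by norm_num]
  congr 1
  simp only [one_mul]
  abel

lemma TrMEMY {n : Type*} [Fintype n] [DecidableEq n] (W B : Matrix n n ℂ) (e : n ≃ n) :
    (W * B * Wᴴ * pmat e).trace = ∑ f, ∑ g, ∑ h, W f g * B g h * conj (W (e.symm f) h) := by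
  rw [trace_mul_pmat]
  refine Finset.sum_congr rfl fun f _ => ?_
  simp only [Matrix.mul_apply, Matrix.conjTranspose_apply, Finset.sum_mul, RCLike.star_def]
  rw [Finset.sum_comm]

variable (u : Matrix (Fin 2) (Fin 2) ℂ)

def NN (a b b' : Fin 2) : ℂ := if a = 0 then (if b = b' then 1 else 0) else u b b'

def Gm (a b : Fin 2) : Fin 2 → Fin 2 → ℂ := fun y z =>
  NN u a 0 y * conj (NN u b 0 z) + NN u a 1 y * conj (NN u b 1 z)

def Kfun (P0 P1 P2 P3 : Fin 2 → Fin 2 → ℂ) : ℂ :=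
  ∑ y : C4, ∑ z : C4, (cnt y z : ℂ) * (P0 (y 0) (z 0) * P1 (y 1) (z 1) * P2 (y 2) (z 2) * P3 (y 3) (z 3))

lemma W6 (c x d y : C4) : kpow4 2 2 (CUgate u) (fun i => (c i, x i)) (fun i => (d i, y i))
    = (if c = d then 1 else 0) * ∏ i, NN u (c i) (x i) (y i) := by
  simp only [kpow4, Matrix.of_apply]
  by_cases h : c = d
  · subst h; rw [if_pos rfl, one_mul]
    refine Finset.prod_congr rfl fun i _ => ?_
    simp [CUgate, NN]
  · rw [if_neg h, zero_mul]
    obtain ⟨i, hi⟩ : ∃ i, c i ≠ d i := by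
      by_contra hc; push_neg at hc; exact h (funext hc)
    refine Finset.prod_eq_zero (Finset.mem_univ i) ?_
    simp [CUgate, hi]

lemma cmov_symm_pair (s : Equiv.Perm (Fin 4)) (c x : C4) :
    (cmov s).symm (fun i => (c i, x i)) = fun i => ((c ∘ ⇑s⁻¹) i, x i) := rfl

lemma sumx (F : Fin 4 → Fin 2 → ℂ) :
    ∑ x : C4, ∏ i, F i (x i) = ∏ i, (F i 0 + F i 1) := by
  rw [sum_pi4]
  simp only [Fin.prod_univ_four, Matrix.cons_val_zero, Matrix.cons_val_one, Matrix.head_cons,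
    Matrix.cons_val_two, Matrix.tail_cons, Matrix.cons_val_three, Fin.sum_univ_two]
  ring

lemma prodGm (s : Equiv.Perm (Fin 4)) (c y z : C4) :
    (∑ x : C4, (∏ i, NN u (c i) (x i) (y i)) * conj (∏ i, NN u ((c ∘ ⇑s⁻¹) i) (x i) (z i)))
    = Gm u (c 0) ((c ∘ ⇑s⁻¹) 0) (y 0) (z 0) * Gm u (c 1) ((c ∘ ⇑s⁻¹) 1) (y 1) (z 1) *
      Gm u (c 2) ((c ∘ ⇑s⁻¹) 2) (y 2) (z 2) * Gm u (c 3) ((c ∘ ⇑s⁻¹) 3) (y 3) (z 3) := by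
  have : ∀ x : C4, (∏ i, NN u (c i) (x i) (y i)) * conj (∏ i, NN u ((c ∘ ⇑s⁻¹) i) (x i) (z i))
      = ∏ i, (NN u (c i) (x i) (y i) * conj (NN u ((c ∘ ⇑s⁻¹) i) (x i) (z i))) := by
    intro x
    rw [map_prod, Finset.prod_mul_distrib]
  rw [Finset.sum_congr rfl fun x _ => this x,
    sumx (fun i v => NN u (c i) v (y i) * conj (NN u ((c ∘ ⇑s⁻¹) i) v (z i))),
    Fin.prod_univ_four]
  rfl

lemma Smain (s : Equiv.Perm (Fin 4)) :
    (kpow4 2 2 (CUgate u) * Emat * (kpow4 2 2 (CUgate u))ᴴ * pmat (cmov s)).trace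
    = (576:ℂ)⁻¹ * ∑ c : C4, (cnt c (c ∘ ⇑s⁻¹) : ℂ) *
        Kfun (Gm u (c 0) ((c ∘ ⇑s⁻¹) 0)) (Gm u (c 1) ((c ∘ ⇑s⁻¹) 1))
             (Gm u (c 2) ((c ∘ ⇑s⁻¹) 2)) (Gm u (c 3) ((c ∘ ⇑s⁻¹) 3)) := by
  rw [TrMEMY, sum_split, Finset.mul_sum]
  refine Finset.sum_congr rfl fun c _ => ?_
  have key : ∀ x : C4, (∑ g : I4, ∑ h : I4,
      kpow4 2 2 (CUgate u) (fun i => (c i, x i)) g * Emat g h *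
        conj (kpow4 2 2 (CUgate u) ((cmov s).symm (fun i => (c i, x i))) h))
      = ∑ y : C4, ∑ z : C4, (576:ℂ)⁻¹ * (cnt c (c ∘ ⇑s⁻¹) : ℂ) * ((cnt y z : ℂ) *
          ((∏ i, NN u (c i) (x i) (y i)) * conj (∏ i, NN u ((c ∘ ⇑s⁻¹) i) (x i) (z i)))) := by
    intro x
    rw [cmov_symm_pair, sum_split]
    refine (Finset.sum_eq_single c (fun d _ hd => ?_) (fun hc => absurd (Finset.mem_univ c) hc)).trans ?_
    · refine Finset.sum_eq_zero fun y _ => Finset.sum_eq_zero fun h _ => ?_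
      rw [W6, if_neg (fun hh => hd hh.symm), zero_mul, zero_mul, zero_mul]
    · refine Finset.sum_congr rfl fun y _ => ?_
      rw [sum_split]
      refine (Finset.sum_eq_single (c ∘ ⇑s⁻¹) (fun e _ he => ?_)
        (fun hc => absurd (Finset.mem_univ _) hc)).trans ?_
      · refine Finset.sum_eq_zero fun z _ => ?_
        rw [W6 u (c ∘ ⇑s⁻¹) x e z, if_neg (fun hh => he hh.symm), zero_mul, map_zero, mul_zero]
      · refine Finset.sum_congr rfl fun z _ => ?_
        rw [W6, W6, if_pos rfl, if_pos rfl, one_mul, one_mul]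
        simp only [Emat, Matrix.of_apply, ctrlf_pair, tgtf_pair]
        push_cast
        ring
  rw [Finset.sum_congr rfl fun x _ => key x]
  rw [Finset.sum_comm, Kfun]
  simp only [Finset.mul_sum]
  refine Finset.sum_congr rfl fun y _ => ?_
  rw [Finset.sum_comm]
  refine Finset.sum_congr rfl fun z _ => ?_
  rw [← Finset.mul_sum, ← Finset.mul_sum, prodGm u s c y z]
  ring

set_option maxHeartbeats 8000000 in
lemma K4gen (P Q R S : Fin 2 → Fin 2 → ℂ) : Kfun P Q R S = (24 : ℂ) * P 0 0 * Q 0 0 * R 0 0 * S 0 0 + (6 : ℂ) * P 0 0 * Q 0 0 * R 0 0 * S 1 1 + (6 : ℂ) * P 0 0 * Q 0 0 * R 0 1 * S 1 0 + (6 : ℂ) * P 0 0 * Q 0 0 * R 1 0 * S 0 1 + (6 : ℂ) * P 0 0 * Q 0 0 * R 1 1 * S 0 0 + (4 : ℂ) * P 0 0 * Q 0 0 * R 1 1 * S 1 1 + (6 : ℂ) * P 0 0 * Q 0 1 * R 0 0 * S 1 0 + (6 : ℂ) * P 0 0 * Q 0 1 * R 1 0 * S 0 0 + (4 : ℂ)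 * P 0 0 * Q 0 1 * R 1 0 * S 1 1 + (4 : ℂ) * P 0 0 * Q 0 1 * R 1 1 * S 1 0 + (6 : ℂ) * P 0 0 * Q 1 0 * R 0 0 * S 0 1 + (6 : ℂ) * P 0 0 * Q 1 0 * R 0 1 * S 0 0 + (4 : ℂ) * P 0 0 * Q 1 0 * R 0 1 * S 1 1 + (4 : ℂ) * P 0 0 * Q 1 0 * R 1 1 * S 0 1 + (6 : ℂ) * P 0 0 * Q 1 1 * R 0 0 * S 0 0 + (4 : ℂ) * P 0 0 * Q 1 1 * R 0 0 * S 1 1 + (4 : ℂ) * P 0 0 * Q 1 1 * R 0 1 * S 1 0 + (4 : ℂ) * P 0 0 * Q 1 1 * R 1 0 * S 0 1 + (4 : ℂ) * P 0 0 * Q 1 1 * R 1 1 * S 0 0 + (6 : ℂ) * P 0 0 * Q 1 1 * R 1 1 * S 1 1 + (6 : ℂ) * P 0 1 * Q 0 0 * R 0 0 * S 1 0 + (6 : ℂ) * P 0 1 * Q 0 0 * R 1 0 * S 0 0 + (4 : ℂ) * P 0 1 * Q 0 0 * R 1 0 * S 1 1 + (4 : ℂ) * P 0 1 * Q 0 0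 * R 1 1 * S 1 0 + (4 : ℂ) * P 0 1 * Q 0 1 * R 1 0 * S 1 0 + (6 : ℂ) * P 0 1 * Q 1 0 * R 0 0 * S 0 0 + (4 : ℂ) * P 0 1 * Q 1 0 * R 0 0 * S 1 1 + (4 : ℂ) * P 0 1 * Q 1 0 * R 0 1 * S 1 0 + (4 : ℂ) * P 0 1 * Q 1 0 * R 1 0 * S 0 1 + (4 : ℂ) * P 0 1 * Q 1 0 * R 1 1 * S 0 0 + (6 : ℂ) * P 0 1 * Q 1 0 * R 1 1 * S 1 1 + (4 : ℂ) * P 0 1 * Q 1 1 * R 0 0 * S 1 0 + (4 : ℂ) * P 0 1 * Q 1 1 * R 1 0 * S 0 0 + (6 : ℂ) * P 0 1 * Q 1 1 * R 1 0 * S 1 1 + (6 : ℂ) * P 0 1 * Q 1 1 * R 1 1 * S 1 0 + (6 : ℂ) * P 1 0 * Q 0 0 * R 0 0 * S 0 1 + (6 : ℂ) * P 1 0 * Q 0 0 * R 0 1 * S 0 0 + (4 : ℂ) * P 1 0 * Q 0 0 * R 0 1 * S 1 1 + (4 : ℂ) * P 1 0 * Q 0 0 * R 1 1 * S 0 1 +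 (6 : ℂ) * P 1 0 * Q 0 1 * R 0 0 * S 0 0 + (4 : ℂ) * P 1 0 * Q 0 1 * R 0 0 * S 1 1 + (4 : ℂ) * P 1 0 * Q 0 1 * R 0 1 * S 1 0 + (4 : ℂ) * P 1 0 * Q 0 1 * R 1 0 * S 0 1 + (4 : ℂ) * P 1 0 * Q 0 1 * R 1 1 * S 0 0 + (6 : ℂ) * P 1 0 * Q 0 1 * R 1 1 * S 1 1 + (4 : ℂ) * P 1 0 * Q 1 0 * R 0 1 * S 0 1 + (4 : ℂ) * P 1 0 * Q 1 1 * R 0 0 * S 0 1 + (4 : ℂ) * P 1 0 * Q 1 1 * R 0 1 * S 0 0 + (6 : ℂ) * P 1 0 * Q 1 1 * R 0 1 * S 1 1 + (6 : ℂ) * P 1 0 * Q 1 1 * R 1 1 * S 0 1 + (6 : ℂ) * P 1 1 * Q 0 0 * R 0 0 * S 0 0 + (4 : ℂ) * P 1 1 * Q 0 0 * R 0 0 * S 1 1 + (4 : ℂ) * P 1 1 * Q 0 0 * R 0 1 * S 1 0 + (4 : ℂ) * P 1 1 * Q 0 0 * R 1 0 * S 0 1 + (4 : ℂ) * P 1 1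 * Q 0 0 * R 1 1 * S 0 0 + (6 : ℂ) * P 1 1 * Q 0 0 * R 1 1 * S 1 1 + (4 : ℂ) * P 1 1 * Q 0 1 * R 0 0 * S 1 0 + (4 : ℂ) * P 1 1 * Q 0 1 * R 1 0 * S 0 0 + (6 : ℂ) * P 1 1 * Q 0 1 * R 1 0 * S 1 1 + (6 : ℂ) * P 1 1 * Q 0 1 * R 1 1 * S 1 0 + (4 : ℂ) * P 1 1 * Q 1 0 * R 0 0 * S 0 1 + (4 : ℂ) * P 1 1 * Q 1 0 * R 0 1 * S 0 0 + (6 : ℂ) * P 1 1 * Q 1 0 * R 0 1 * S 1 1 + (6 : ℂ) * P 1 1 * Q 1 0 * R 1 1 * S 0 1 + (4 : ℂ) * P 1 1 * Q 1 1 * R 0 0 * S 0 0 + (6 : ℂ) * P 1 1 * Q 1 1 * R 0 0 * S 1 1 + (6 : ℂ) * P 1 1 * Q 1 1 * R 0 1 * S 1 0 + (6 : ℂ) * P 1 1 * Q 1 1 * R 1 0 * S 0 1 + (6 : ℂ) * P 1 1 * Q 1 1 * R 1 1 * S 0 0 + (24 : ℂ) * P 1 1 * Q 1 1 * R 1 1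 * S 1 1 := by
  rw [Kfun]
  simp only [sum_pi4]
  simp only [Fin.sum_univ_two, Matrix.cons_val_zero, Matrix.cons_val_one, Matrix.head_cons,
    Matrix.cons_val_two, Matrix.tail_cons, Matrix.cons_val_three, cnt_eq, wt_eval,
    Fin.val_zero, Fin.val_one]
  norm_num [Nat.factorial]
  try ring

def dd : Fin 2 → Fin 2 → ℂ := fun y z => if y = z then 1 else 0
def cu : Fin 2 → Fin 2 → ℂ := fun y z => conj (u y z)
def ut : Fin 2 → Fin 2 → ℂ := fun y z => u z y

lemma Gm00 : Gm u 0 0 = dd := by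
  funext y z; fin_cases y <;> fin_cases z <;> simp [Gm, NN, dd]

lemma Gm01 : Gm u 0 1 = cu u := by
  funext y z; fin_cases y <;> fin_cases z <;> simp [Gm, NN, cu]

lemma Gm10 : Gm u 1 0 = ut u := by
  funext y z; fin_cases y <;> fin_cases z <;> simp [Gm, NN, ut]

lemma Gm11 (hu : uᴴ * u = 1) : Gm u 1 1 = dd := by
  funext y z
  have h := congrFun (congrFun hu z) y
  simp only [Matrix.mul_apply, Fin.sum_univ_two, Matrix.conjTranspose_apply,
    Matrix.one_apply, RCLike.star_def] at h
  simp only [Gm, NN, dd, if_neg (one_ne_zero : (1:Fin 2) ≠ 0)]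
  by_cases hyz : y = z
  · subst hyz; rw [if_pos rfl]; rw [if_pos rfl] at h; linear_combination h
  · rw [if_neg hyz]; rw [if_neg (fun hh => hyz hh.symm)] at h; linear_combination h

lemma comp_one : ∀ a b c d : Fin 2, (![a,b,c,d] : C4) ∘ ⇑(1 : Equiv.Perm (Fin 4))⁻¹ = ![a,b,c,d] := by decide
lemma comp_sw01 : ∀ a b c d : Fin 2, (![a,b,c,d] : C4) ∘ ⇑(Equiv.swap (0:Fin 4) 1)⁻¹ = ![b,a,c,d] := by decide
lemma comp_sw23 : ∀ a b c d : Fin 2, (![a,b,c,d] : C4) ∘ ⇑(Equiv.swap (2:Fin 4) 3)⁻¹ = ![a,b,d,c] := by decide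
lemma comp_swb : ∀ a b c d : Fin 2, (![a,b,c,d] : C4) ∘ ⇑(Equiv.swap (0:Fin 4) 1 * Equiv.swap (2:Fin 4) 3)⁻¹ = ![b,a,d,c] := by decide

set_option maxHeartbeats 16000000 in
lemma Sval_id (hu : uᴴ * u = 1) : ((576:ℂ)⁻¹ * ∑ c : C4, (cnt c (c ∘ ⇑((1 : Equiv.Perm (Fin 4)))⁻¹) : ℂ) *
    Kfun (Gm u (c 0) ((c ∘ ⇑((1 : Equiv.Perm (Fin 4)))⁻¹) 0)) (Gm u (c 1) ((c ∘ ⇑((1 : Equiv.Perm (Fin 4)))⁻¹) 1))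
         (Gm u (c 2) ((c ∘ ⇑((1 : Equiv.Perm (Fin 4)))⁻¹) 2)) (Gm u (c 3) ((c ∘ ⇑((1 : Equiv.Perm (Fin 4)))⁻¹) 3))) = (25 : ℂ) := by
  rw [sum_pi4]
  simp only [Fin.sum_univ_two, comp_one, Matrix.cons_val_zero, Matrix.cons_val_one,
    Matrix.head_cons, Matrix.cons_val_two, Matrix.tail_cons, Matrix.cons_val_three,
    Gm00, Gm01, Gm10, Gm11 u hu]
  simp only [cnt_eq, wt_eval, Fin.val_zero, Fin.val_one]
  simp only [K4gen]
  simp only [dd, cu, ut]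
  norm_num [Nat.factorial]
  try ring

set_option maxHeartbeats 16000000 in
lemma Sval_sw01 (hu : uᴴ * u = 1) : ((576:ℂ)⁻¹ * ∑ c : C4, (cnt c (c ∘ ⇑(Equiv.swap (0:Fin 4) 1)⁻¹) : ℂ) *
    Kfun (Gm u (c 0) ((c ∘ ⇑(Equiv.swap (0:Fin 4) 1)⁻¹) 0)) (Gm u (c 1) ((c ∘ ⇑(Equiv.swap (0:Fin 4) 1)⁻¹) 1))
         (Gm u (c 2) ((c ∘ ⇑(Equiv.swap (0:Fin 4) 1)⁻¹) 2)) (Gm u (c 3) ((c ∘ ⇑(Equiv.swap (0:Fin 4) 1)⁻¹) 3))) = (50/3 : ℂ) + (25/9 : ℂ) * u 0 0 * conj (u 0 0) + (25/18 : ℂ) * u 0 0 * conj (u 1 1) + (25/18 : ℂ) * conj (u 0 0) * u 1 1 + (25/18 : ℂ) * u 0 1 * conj (u 0 1) + (25/18 : ℂ) * u 1 0 * conj (u 1 0) + (25/9 : ℂ) * u 1 1 * conj (u 1 1) := by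
  rw [sum_pi4]
  simp only [Fin.sum_univ_two, comp_sw01, Matrix.cons_val_zero, Matrix.cons_val_one,
    Matrix.head_cons, Matrix.cons_val_two, Matrix.tail_cons, Matrix.cons_val_three,
    Gm00, Gm01, Gm10, Gm11 u hu]
  simp only [cnt_eq, wt_eval, Fin.val_zero, Fin.val_one]
  simp only [K4gen]
  simp only [dd, cu, ut]
  norm_num [Nat.factorial]
  try ring

set_option maxHeartbeats 16000000 in
lemma Sval_sw23 (hu : uᴴ * u = 1) : ((576:ℂ)⁻¹ * ∑ c : C4, (cnt c (c ∘ ⇑(Equiv.swap (2:Fin 4) 3)⁻¹) : ℂ) *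
    Kfun (Gm u (c 0) ((c ∘ ⇑(Equiv.swap (2:Fin 4) 3)⁻¹) 0)) (Gm u (c 1) ((c ∘ ⇑(Equiv.swap (2:Fin 4) 3)⁻¹) 1))
         (Gm u (c 2) ((c ∘ ⇑(Equiv.swap (2:Fin 4) 3)⁻¹) 2)) (Gm u (c 3) ((c ∘ ⇑(Equiv.swap (2:Fin 4) 3)⁻¹) 3))) = (50/3 : ℂ) + (25/9 : ℂ) * u 0 0 * conj (u 0 0) + (25/18 : ℂ) * u 0 0 * conj (u 1 1) + (25/18 : ℂ) * conj (u 0 0) * u 1 1 + (25/18 : ℂ) * u 0 1 * conj (u 0 1) + (25/18 : ℂ) * u 1 0 * conj (u 1 0) + (25/9 : ℂ) * u 1 1 * conj (u 1 1) := by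
  rw [sum_pi4]
  simp only [Fin.sum_univ_two, comp_sw23, Matrix.cons_val_zero, Matrix.cons_val_one,
    Matrix.head_cons, Matrix.cons_val_two, Matrix.tail_cons, Matrix.cons_val_three,
    Gm00, Gm01, Gm10, Gm11 u hu]
  simp only [cnt_eq, wt_eval, Fin.val_zero, Fin.val_one]
  simp only [K4gen]
  simp only [dd, cu, ut]
  norm_num [Nat.factorial]
  try ring

set_option maxHeartbeats 16000000 in
lemma Sval_swb (hu : uᴴ * u = 1) : ((576:ℂ)⁻¹ * ∑ c : C4, (cnt c (c ∘ ⇑(Equiv.swap (0:Fin 4) 1 * Equiv.swap (2:Fin 4) 3)⁻¹) : ℂ) *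
    Kfun (Gm u (c 0) ((c ∘ ⇑(Equiv.swap (0:Fin 4) 1 * Equiv.swap (2:Fin 4) 3)⁻¹) 0)) (Gm u (c 1) ((c ∘ ⇑(Equiv.swap (0:Fin 4) 1 * Equiv.swap (2:Fin 4) 3)⁻¹) 1))
         (Gm u (c 2) ((c ∘ ⇑(Equiv.swap (0:Fin 4) 1 * Equiv.swap (2:Fin 4) 3)⁻¹) 2)) (Gm u (c 3) ((c ∘ ⇑(Equiv.swap (0:Fin 4) 1 * Equiv.swap (2:Fin 4) 3)⁻¹) 3))) = (35/3 : ℂ) + (10/3 : ℂ) * u 0 0 * conj (u 0 0) + (5/3 : ℂ) * u 0 0 * conj (u 1 1) + (5/3 : ℂ) * conj (u 0 0) * u 1 1 + (5/3 : ℂ) * u 0 1 * conj (u 0 1) + (5/3 : ℂ) * u 1 0 * conj (u 1 0) + (10/3 : ℂ) * u 1 1 * conj (u 1 1) + (2/3 : ℂ) * u 0 0 * u 0 0 * conj (u 0 0) * conj (u 0 0) + (1/3 : ℂ) * u 0 0 * u 0 0 * conj (u 0 0) * conj (u 1 1) + (1/3 : ℂ) * u 0 0 * u 0 0 * conj (u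 0 1) * conj (u 1 0) + (1/9 : ℂ) * u 0 0 * u 0 0 * conj (u 1 1) * conj (u 1 1) + (1/3 : ℂ) * u 0 0 * conj (u 0 0) * conj (u 0 0) * u 1 1 + (2/3 : ℂ) * u 0 0 * conj (u 0 0) * u 0 1 * conj (u 0 1) + (2/3 : ℂ) * u 0 0 * conj (u 0 0) * u 1 0 * conj (u 1 0) + (4/9 : ℂ) * u 0 0 * conj (u 0 0) * u 1 1 * conj (u 1 1) + (4/9 : ℂ) * u 0 0 * u 0 1 * conj (u 0 1) * conj (u 1 1) + (4/9 : ℂ) * u 0 0 * conj (u 0 1) * conj (u 1 0) * u 1 1 + (4/9 : ℂ) * u 0 0 * u 1 0 * conj (u 1 0) * conj (u 1 1) + (1/3 : ℂ) * u 0 0 * u 1 1 * conj (u 1 1) * conj (u 1 1) + (1/3 : ℂ) * conj (u 0 0) * conj (u 0 0) * u 0 1 * u 1 0 + (1/9 : ℂ) * conj (u 0 0) * conj (u 0 0) * u 1 1 * u 1 1 + (4/9 : ℂ) * conj (u 0 0) * u 0 1 * conj (u 0 1) * u 1 1 + (4/9 : ℂ) * conj (u 0 0) * u 0 1 * u 1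 0 * conj (u 1 1) + (4/9 : ℂ) * conj (u 0 0) * u 1 0 * conj (u 1 0) * u 1 1 + (1/3 : ℂ) * conj (u 0 0) * u 1 1 * u 1 1 * conj (u 1 1) + (1/9 : ℂ) * u 0 1 * u 0 1 * conj (u 0 1) * conj (u 0 1) + (4/9 : ℂ) * u 0 1 * conj (u 0 1) * u 1 0 * conj (u 1 0) + (2/3 : ℂ) * u 0 1 * conj (u 0 1) * u 1 1 * conj (u 1 1) + (1/3 : ℂ) * u 0 1 * u 1 0 * conj (u 1 1) * conj (u 1 1) + (1/3 : ℂ) * conj (u 0 1) * conj (u 1 0) * u 1 1 * u 1 1 + (1/9 : ℂ) * u 1 0 * u 1 0 * conj (u 1 0) * conj (u 1 0) + (2/3 : ℂ) * u 1 0 * conj (u 1 0) * u 1 1 * conj (u 1 1) + (2/3 : ℂ) * u 1 1 * u 1 1 * conj (u 1 1) * conj (u 1 1) := by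
  rw [sum_pi4]
  simp only [Fin.sum_univ_two, comp_swb, Matrix.cons_val_zero, Matrix.cons_val_one,
    Matrix.head_cons, Matrix.cons_val_two, Matrix.tail_cons, Matrix.cons_val_three,
    Gm00, Gm01, Gm10, Gm11 u hu]
  simp only [cnt_eq, wt_eval, Fin.val_zero, Fin.val_one]
  simp only [K4gen]
  simp only [dd, cu, ut]
  norm_num [Nat.factorial]
  try ring

-- ### final assembly lemmas
lemma Trbig (u : Matrix (Fin 2) (Fin 2) ℂ) (hu : uᴴ * u = 1) :
    (kpow4 2 2 (CUgate u) * P1357 2 2 * P2468 2 2 * (kpow4 2 2 (CUgate u))ᴴ * P13mc 2 2 *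
      P57mc 2 2).trace = (5/6 : ℂ) + (-5/9 : ℂ) * u 0 0 * conj (u 0 0) + (-5/18 : ℂ) * u 0 0 * conj (u 1 1) + (-5/18 : ℂ) * conj (u 0 0) * u 1 1 + (-5/18 : ℂ) * u 0 1 * conj (u 0 1) + (-5/18 : ℂ) * u 1 0 * conj (u 1 0) + (-5/9 : ℂ) * u 1 1 * conj (u 1 1) + (1/6 : ℂ) * u 0 0 * u 0 0 * conj (u 0 0) * conj (u 0 0) + (1/12 : ℂ) * u 0 0 * u 0 0 * conj (u 0 0) * conj (u 1 1) + (1/12 : ℂ) * u 0 0 * u 0 0 * conj (u 0 1) * conj (u 1 0) + (1/36 : ℂ) * u 0 0 * u 0 0 * conj (u 1 1) * conj (u 1 1) + (1/12 : ℂ) * u 0 0 * conj (u 0 0) * conj (u 0 0) * u 1 1 + (1/6 : ℂ) * u 0 0 * conj (u 0 0) * u 0 1 * conj (u 0 1) + (1/6 : ℂ) * u 0 0 * conj (u 0 0) * u 1 0 * conj (u 1 0) + (1/9 : ℂ) * u 0 0 * conj (u 0 0) * u 1 1 * conj (u 1 1) + (1/9 : ℂ) * u 0 0 * u 0 1 *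 conj (u 0 1) * conj (u 1 1) + (1/9 : ℂ) * u 0 0 * conj (u 0 1) * conj (u 1 0) * u 1 1 + (1/9 : ℂ) * u 0 0 * u 1 0 * conj (u 1 0) * conj (u 1 1) + (1/12 : ℂ) * u 0 0 * u 1 1 * conj (u 1 1) * conj (u 1 1) + (1/12 : ℂ) * conj (u 0 0) * conj (u 0 0) * u 0 1 * u 1 0 + (1/36 : ℂ) * conj (u 0 0) * conj (u 0 0) * u 1 1 * u 1 1 + (1/9 : ℂ) * conj (u 0 0) * u 0 1 * conj (u 0 1) * u 1 1 + (1/9 : ℂ) * conj (u 0 0) * u 0 1 * u 1 0 * conj (u 1 1) + (1/9 : ℂ) * conj (u 0 0) * u 1 0 * conj (u 1 0) * u 1 1 + (1/12 : ℂ) * conj (u 0 0) * u 1 1 * u 1 1 * conj (u 1 1) + (1/36 : ℂ) * u 0 1 * u 0 1 * conj (u 0 1) * conj (u 0 1) + (1/9 : ℂ) * u 0 1 * conj (u 0 1) * u 1 0 * conj (u 1 0) + (1/6 : ℂ) * u 0 1 * conj (u 0 1) * u 1 1 * conj (u 1 1) + (1/12 : ℂ) * u 0 1 * u 1 0 * conj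 (u 1 1) * conj (u 1 1) + (1/12 : ℂ) * conj (u 0 1) * conj (u 1 0) * u 1 1 * u 1 1 + (1/36 : ℂ) * u 1 0 * u 1 0 * conj (u 1 0) * conj (u 1 0) + (1/6 : ℂ) * u 1 0 * conj (u 1 0) * u 1 1 * conj (u 1 1) + (1/6 : ℂ) * u 1 1 * u 1 1 * conj (u 1 1) * conj (u 1 1) := by
  rw [mul_assoc _ (P13mc 2 2) (P57mc 2 2),
    mul_assoc (kpow4 2 2 (CUgate u)) (P1357 2 2) (P2468 2 2), Emat_eq, CD_eq]
  rw [Matrix.mul_smul, Matrix.trace_smul, mul_add, mul_sub, mul_sub, Matrix.trace_add,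
    Matrix.trace_sub, Matrix.trace_sub]
  rw [Smain, Smain, Smain, Smain, Sval_id u hu, Sval_sw01 u hu, Sval_sw23 u hu, Sval_swb u hu]
  simp only [smul_eq_mul]
  ring

lemma ePow_CU (u : Matrix (Fin 2) (Fin 2) ℂ) (hu : uᴴ * u = 1) :
    ePow 2 2 (CUgate u)
      = 2 / 9 * (1 - (u 0 0 + u 1 1) * (conj (u 0 0) + conj (u 1 1)) / 4) := by
  rw [ePow, etrace_val u hu]
  norm_num

lemma relR (u : Matrix (Fin 2) (Fin 2) ℂ) (hu : uᴴ * u = 1) (i j : Fin 2) :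
    conj (u 0 i) * u 0 j + conj (u 1 i) * u 1 j = if i = j then 1 else 0 := by
  have h := congrFun (congrFun hu i) j
  simp only [Matrix.mul_apply, Fin.sum_univ_two, Matrix.conjTranspose_apply, Matrix.one_apply,
    RCLike.star_def] at h
  exact h

lemma relL (u : Matrix (Fin 2) (Fin 2) ℂ) (hu : uᴴ * u = 1) (i j : Fin 2) :
    u i 0 * conj (u j 0) + u i 1 * conj (u j 1) = if i = j then 1 else 0 := by
  have hu' : u * uᴴ = 1 := mul_eq_one_comm.mp hu
  have h := congrFun (congrFun hu' i) j
  simp only [Matrix.mul_apply, Fin.sum_univ_two, Matrix.conjTranspose_apply, Matrix.one_apply,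
    RCLike.star_def] at h
  exact h

lemma deltaSq_CU (u : Matrix (Fin 2) (Fin 2) ℂ) (hu : uᴴ * u = 1) :
    deltaSq 2 2 (CUgate u) = 11 / 25 * (ePow 2 2 (CUgate u)) ^ 2 := by
  have r1 := relR u hu 0 0
  have r2 := relR u hu 0 1
  have r3 := relR u hu 1 0
  have r4 := relR u hu 1 1
  have r5 := relL u hu 0 0
  have r6 := relL u hu 0 1
  have r7 := relL u hu 1 0
  rw [if_pos rfl] at r1 r4 r5
  rw [if_neg (by decide : ¬ (0:Fin 2) = 1)] at r2 r6
  rw [if_neg (by decide : ¬ (1:Fin 2) = 0)] at r3 r7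
  rw [deltaSq, Trbig u hu, ePow_CU u hu, Dc]
  norm_num [Nat.factorial]
  linear_combination ((-1/25 : ℂ) + (1/45 : ℂ) * u 0 0 * conj (u 0 0) + (4/225 : ℂ) * u 0 0 * conj (u 1 1) + (4/225 : ℂ) * conj (u 0 0) * u 1 1 + (4/225 : ℂ) * u 0 1 * conj (u 0 1) + (1/225 : ℂ) * u 1 0 * conj (u 1 0) + (2/75 : ℂ) * u 1 1 * conj (u 1 1)) * r1 + ((4/225 : ℂ) * u 0 0 * conj (u 0 1) + (1/75 : ℂ) * conj (u 0 1) * u 1 1) * r2 + ((4/225 : ℂ) * conj (u 0 0) * u 0 1 + (1/75 : ℂ) * u 0 1 * conj (u 1 1)) * r3 + ((-1/225 : ℂ) + (-2/75 : ℂ) * u 0 0 * conj (u 0 0) + (1/225 : ℂ) * u 0 0 * conj (u 1 1) + (1/225 : ℂ) * conj (u 0 0) * u 1 1 + (1/225 : ℂ) * u 0 1 * conj (u 0 1) + (1/45 : ℂ) * u 1 1 * conj (u 1 1)) * r4 + ((-4/225 : ℂ) + (-1/75 : ℂ) * u 0 0 * conj (u 1 1) + (-1/75 : ℂ) * conj (u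 0 0) * u 1 1) * r5 + ((1/75 : ℂ) * u 0 0 * conj (u 0 1)) * r6 + ((1/75 : ℂ) * conj (u 0 0) * u 0 1) * r7

lemma ePow_CU' (u : Matrix (Fin 2) (Fin 2) ℂ) (hu : uᴴ * u = 1) :
    ePow 2 2 (CUgate u) = 2 / 9 * (1 - ((Complex.normSq u.trace : ℝ) : ℂ) / 4) := by
  rw [ePow_CU u hu, Matrix.trace_fin_two, ← Complex.mul_conj, map_add]
  try ring

lemma nsq_le (u : Matrix (Fin 2) (Fin 2) ℂ) (hu : uᴴ * u = 1) :
    Complex.normSq u.trace ≤ 4 := by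
  have h1 : Complex.normSq (u 0 0) + Complex.normSq (u 1 0) = 1 := by
    have h := relR u hu 0 0
    rw [if_pos rfl, mul_comm, mul_comm (conj (u 1 0)), Complex.mul_conj, Complex.mul_conj] at h
    exact_mod_cast h
  have h2 : Complex.normSq (u 0 1) + Complex.normSq (u 1 1) = 1 := by
    have h := relR u hu 1 1
    rw [if_pos rfl, mul_comm, mul_comm (conj (u 1 1)), Complex.mul_conj, Complex.mul_conj] at h
    exact_mod_cast h
  have ha : ‖u 0 0‖ ≤ 1 := by
    nlinarith [Complex.sq_norm (u 0 0), Complex.normSq_nonneg (u 1 0),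
      norm_nonneg (u 0 0)]
  have hd : ‖u 1 1‖ ≤ 1 := by
    nlinarith [Complex.sq_norm (u 1 1), Complex.normSq_nonneg (u 0 1),
      norm_nonneg (u 1 1)]
  have htr : ‖u 0 0 + u 1 1‖ ≤ 2 :=
    le_trans (norm_add_le _ _) (by linarith)
  rw [Matrix.trace_fin_two, ← Complex.sq_norm]
  nlinarith [norm_nonneg (u 0 0 + u 1 1)]

/-- (Controlled-unitary family) For a `2×2` unitary `u`:
`e(CU) = (2/9)(1 − |Tr u|²/4)`, `Δ²(CU) = (11/25)·e(CU)²`; in particular the ratio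
`Δ/e` equals `√11/5` whenever `e ≠ 0`; and for `u = diag(1, e^{iθ})` this gives
`e = (2/9)sin²(θ/2)` and `Δ² = (44/2025)sin⁴(θ/2)`. -/
theorem ePow_deltaSq_CU (u : Matrix (Fin 2) (Fin 2) ℂ) (hu : uᴴ * u = 1) :
    ePow 2 2 (CUgate u) = (2 / 9) * (1 - ((Complex.normSq u.trace : ℝ) : ℂ) / 4) ∧
    deltaSq 2 2 (CUgate u) = (11 / 25) * (ePow 2 2 (CUgate u)) ^ 2 ∧
    (ePow 2 2 (CUgate u) ≠ 0 →
      Real.sqrt (deltaSq 2 2 (CUgate u)).re / (ePow 2 2 (CUgate u)).re =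
        Real.sqrt 11 / 5) ∧
    (∀ θ : ℝ,
      ePow 2 2 (CUgate !![1, 0; 0, Complex.exp ((θ : ℂ) * Complex.I)]) =
        (2 / 9) * ((Real.sin (θ / 2) : ℝ) : ℂ) ^ 2 ∧
      deltaSq 2 2 (CUgate !![1, 0; 0, Complex.exp ((θ : ℂ) * Complex.I)]) =
        (44 / 2025) * ((Real.sin (θ / 2) : ℝ) : ℂ) ^ 4) := by
  refine ⟨ePow_CU' u hu, deltaSq_CU u hu, ?_, ?_⟩
  · intro hne
    set E : ℝ := 2 / 9 * (1 - Complex.normSq u.trace / 4) with hEdef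
    have heC : ePow 2 2 (CUgate u) = (E : ℂ) := by
      rw [ePow_CU' u hu, hEdef]; push_cast; ring
    have hE0 : 0 ≤ E := by
      have := nsq_le u hu
      rw [hEdef]; nlinarith
    have hEne : E ≠ 0 := fun h0 => hne (by rw [heC, h0, Complex.ofReal_zero])
    have hd : deltaSq 2 2 (CUgate u) = ((11 / 25 * E ^ 2 : ℝ) : ℂ) := by
      rw [deltaSq_CU u hu, heC]; push_cast; ring
    rw [hd, heC, Complex.ofReal_re, Complex.ofReal_re]
    have hsq : (11 / 25 * E ^ 2 : ℝ) = (Real.sqrt 11 / 5 * E) ^ 2 := by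
      rw [show ((Real.sqrt 11 / 5 * E) ^ 2 : ℝ) = Real.sqrt 11 ^ 2 * E ^ 2 / 25 by ring,
        Real.sq_sqrt (by norm_num : (0:ℝ) ≤ 11)]
      ring
    rw [hsq, Real.sqrt_sq (by positivity), mul_div_assoc, div_self hEne, mul_one]
  · intro θ
    set uθ : Matrix (Fin 2) (Fin 2) ℂ := !![1, 0; 0, Complex.exp ((θ : ℂ) * Complex.I)] with huθdef
    have hconj : conj (Complex.exp ((θ : ℂ) * Complex.I)) =
        Complex.exp (-((θ : ℂ) * Complex.I)) := by
      rw [← Complex.exp_conj, _root_.map_mul, Complex.conj_ofReal, Complex.conj_I, mul_neg]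
    have huθ : uθᴴ * uθ = 1 := by
      ext i j
      fin_cases i <;> fin_cases j <;>
        simp [huθdef, Matrix.mul_apply, Fin.sum_univ_two, Matrix.conjTranspose_apply,
          Matrix.one_apply, RCLike.star_def, hconj, ← Complex.exp_add]
    have htr : uθ.trace = 1 + Complex.exp ((θ : ℂ) * Complex.I) := by
      rw [Matrix.trace_fin_two]; simp [huθdef]
    have hns : Complex.normSq uθ.trace = 2 + 2 * Real.cos θ := by
      rw [htr]
      have : (1 : ℂ) + Complex.exp ((θ : ℂ) * Complex.I)
          = ((1 + Real.cos θ : ℝ) : ℂ) + ((Real.sin θ : ℝ) : ℂ) * Complex.I := by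
        rw [Complex.exp_mul_I]
        push_cast [Complex.ofReal_cos, Complex.ofReal_sin]
        ring
      rw [this, Complex.normSq_add_mul_I]
      nlinarith [Real.sin_sq_add_cos_sq θ]
    have hkey : (1 : ℂ) - ((Complex.normSq uθ.trace : ℝ) : ℂ) / 4
        = ((Real.sin (θ / 2) : ℝ) : ℂ) ^ 2 := by
      have h2 := Real.cos_two_mul (θ / 2)
      rw [show 2 * (θ / 2) = θ by ring] at h2
      have h3 := Real.sin_sq_add_cos_sq (θ / 2)
      have hr : (1 : ℝ) - (2 + 2 * Real.cos θ) / 4 = Real.sin (θ / 2) ^ 2 := by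
        linarith
      rw [hns]
      have hc : ((Real.sin (θ / 2) : ℝ) : ℂ) ^ 2 = ((Real.sin (θ / 2) ^ 2 : ℝ) : ℂ) := by
        norm_cast
      rw [hc, ← hr]
      push_cast
      ring
    have he : ePow 2 2 (CUgate uθ) = (2 / 9) * ((Real.sin (θ / 2) : ℝ) : ℂ) ^ 2 := by
      rw [ePow_CU' uθ huθ, hkey]
    refine ⟨he, ?_⟩
    rw [deltaSq_CU uθ huθ, he]
    ring
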